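/- Let ‖·‖ be a semi-norm on ℝⁿ and suppose that for each i, ‖eᵢ‖ = aᵢ for given nonnegative reals aᵢ, and that ‖∑ᵢ eᵢ‖ = ∑ᵢ aᵢ. Then for any vector v = ∑ᵢ cᵢeᵢ with all cᵢ ≥ 0 and ∑ᵢ cᵢaᵢ = 1 (where not all aᵢ are zero), we have ‖v‖ = 1. -/

import Mathlib

lemma seminorm_sum_le' {n : ℕ} (p : Seminorm ℝ (Fin n → ℝ)) (s : Finset (Fin n))
    (f : Fin n → (Fin n → ℝ)) : p (∑ i ∈ s, f i) ≤ ∑ i ∈ s, p (f i) := by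
  classical
  induction s using Finset.induction_on with
  | empty => simp
  | insert _ _ h ih =>
    rw [Finset.sum_insert h, Finset.sum_insert h]
    exact le_trans (map_add_le_add p _ _) (by linarith)

/-- If a semi-norm takes values `aᵢ` on the standard basis vectors and is additive at
the all-ones point, then every nonnegative vector on the affine hyperplane
`∑ cᵢ aᵢ = 1` has norm exactly `1`. -/
theorem seminorm_eq_one_on_affine_slice (n : ℕ) (p : Seminorm ℝ (Fin n → ℝ))
    (a : Fin n → ℝ) (ha : ∀ i, 0 ≤ a i)
    (hpe : ∀ i, p (Pi.single i (1 : ℝ)) = a i)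
    (hsum : p (∑ i, Pi.single i (1 : ℝ)) = ∑ i, a i)
    (hne : ∃ i, a i ≠ 0)
    (c : Fin n → ℝ) (hc : ∀ i, 0 ≤ c i) (hone : ∑ i, c i * a i = 1) :
    p (∑ i, c i • (Pi.single i (1 : ℝ) : Fin n → ℝ)) = 1 := by
  classical
  set v : Fin n → ℝ := ∑ i, c i • (Pi.single i (1 : ℝ) : Fin n → ℝ) with hv
  -- p of a scaled basis vector
  have hps : ∀ (t : ℝ) (i : Fin n), 0 ≤ t → p (t • (Pi.single i (1:ℝ) : Fin n → ℝ)) = t * a i := by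
    intro t i ht
    rw [map_smul_eq_mul, Real.norm_of_nonneg ht, hpe]
  -- upper bound
  have hupper : p v ≤ 1 := by
    calc p v ≤ ∑ i, p (c i • (Pi.single i (1:ℝ) : Fin n → ℝ)) := seminorm_sum_le' p _ _
    _ = ∑ i, c i * a i := by
        apply Finset.sum_congr rfl; intro i _; exact hps _ _ (hc i)
    _ = 1 := hone
  -- n must be positive and some c i > 0
  have hcpos : ∃ i, 0 < c i := by
    by_contra h
    push_neg at h
    have : ∀ i, c i = 0 := fun i => le_antisymm (h i) (hc i)
    simp [this] at hone
  obtain ⟨i₀, hi₀⟩ := hcpos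
  -- t = max of c
  obtain ⟨j, -, hj⟩ := Finset.exists_max_image Finset.univ c ⟨i₀, Finset.mem_univ i₀⟩
  set t := c j with htdef
  have ht : 0 < t := lt_of_lt_of_le hi₀ (hj i₀ (Finset.mem_univ i₀))
  -- lower bound: 𝟙 = t⁻¹ • v + w
  have hw : (∑ i, (Pi.single i (1:ℝ) : Fin n → ℝ)) = t⁻¹ • v + ∑ i, (1 - c i / t) • (Pi.single i (1:ℝ) : Fin n → ℝ) := by
    rw [hv, Finset.smul_sum, ← Finset.sum_add_distrib]
    apply Finset.sum_congr rfl
    intro i _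
    rw [smul_smul, ← add_smul]
    congr 1
    field_simp
    simp [ht.ne']
  have hlow : 1 ≤ p v := by
    have h1 : p (∑ i, (Pi.single i (1:ℝ) : Fin n → ℝ)) ≤ t⁻¹ * p v + ∑ i, (1 - c i / t) * a i := by
      rw [hw]
      refine le_trans (map_add_le_add p _ _) ?_
      have h2 : p (t⁻¹ • v) = t⁻¹ * p v := by
        rw [map_smul_eq_mul, Real.norm_of_nonneg (by positivity)]
      have h3 : p (∑ i, (1 - c i / t) • (Pi.single i (1:ℝ) : Fin n → ℝ)) ≤ ∑ i, (1 - c i / t) * a i := by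
        refine le_trans (seminorm_sum_le' p _ _) ?_
        apply Finset.sum_le_sum
        intro i _
        have hnn : 0 ≤ 1 - c i / t := by
          have := hj i (Finset.mem_univ i)
          rw [sub_nonneg, div_le_one ht]
          exact this
        rw [hps _ _ hnn]
      linarith
    rw [hsum] at h1
    have h4 : ∑ i, (1 - c i / t) * a i = ∑ i, a i - t⁻¹ := by
      have : ∑ i, (1 - c i / t) * a i = ∑ i, a i - t⁻¹ * ∑ i, c i * a i := by
        rw [Finset.mul_sum, ← Finset.sum_sub_distrib]
        apply Finset.sum_congr rfl
        intro i _
        field_simp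
      rw [this, hone, mul_one]
    rw [h4] at h1
    have : t⁻¹ ≤ t⁻¹ * p v := by linarith
    have := le_of_mul_le_mul_left (by linarith [this] : t⁻¹ * 1 ≤ t⁻¹ * p v) (by positivity)
    linarith
  linarith
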